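/- If a 2×2 block matrix M = [[A, B], [C, D]] with A, D invertible has eigenvalue 0 (i.e., M is singular), then ‖A⁻¹ B‖₂ ≥ 1 or ‖D⁻¹ C‖₂ ≥ 1. -/

import Mathlib

open Matrix

noncomputable def specNorm {m : Type*} [Fintype m] [DecidableEq m]
    (M : Matrix m m ℝ) : ℝ :=
  ‖Matrix.toEuclideanCLM (𝕜 := ℝ) M‖

lemma specNorm_mulVec {m : Type*} [Fintype m] [DecidableEq m]
    (X : Matrix m m ℝ) (v : m → ℝ) :
    ‖(WithLp.equiv 2 (m → ℝ)).symm (X *ᵥ v)‖ ≤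
      specNorm X * ‖(WithLp.equiv 2 (m → ℝ)).symm v‖ := by
  have h : Matrix.toEuclideanCLM (𝕜 := ℝ) X ((WithLp.equiv 2 (m → ℝ)).symm v) =
      (WithLp.equiv 2 (m → ℝ)).symm (X *ᵥ v) := Matrix.toEuclideanCLM_toLp (𝕜 := ℝ) X v
  rw [← h]
  exact (Matrix.toEuclideanCLM (𝕜 := ℝ) X).le_opNorm _

theorem stmt13 (n : ℕ) (A B C D : Matrix (Fin n) (Fin n) ℝ)
    (hA : IsUnit A) (hD : IsUnit D)
    (hsing : ¬ IsUnit (Matrix.fromBlocks A B C D)) :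
    1 ≤ specNorm (A⁻¹ * B) ∨ 1 ≤ specNorm (D⁻¹ * C) := by
  by_contra hcon
  push_neg at hcon
  obtain ⟨ha, hb⟩ := hcon
  have hdet : (Matrix.fromBlocks A B C D).det = 0 := by
    by_contra hd
    exact hsing ((Matrix.isUnit_iff_isUnit_det _).2 (isUnit_iff_ne_zero.2 hd))
  obtain ⟨v, hv0, hv⟩ := Matrix.exists_mulVec_eq_zero_iff.2 hdet
  set u : Fin n → ℝ := v ∘ Sum.inl with hu
  set w : Fin n → ℝ := v ∘ Sum.inr with hw
  rw [Matrix.fromBlocks_mulVec] at hv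
  have h1 : A *ᵥ u + B *ᵥ w = 0 := by
    funext i; exact congrFun hv (Sum.inl i)
  have h2 : C *ᵥ u + D *ᵥ w = 0 := by
    funext i; exact congrFun hv (Sum.inr i)
  have hAd : IsUnit A.det := (Matrix.isUnit_iff_isUnit_det _).1 hA
  have hDd : IsUnit D.det := (Matrix.isUnit_iff_isUnit_det _).1 hD
  have hu_eq : u = -((A⁻¹ * B) *ᵥ w) := by
    have h := congrArg (fun x => A⁻¹ *ᵥ x) h1
    simp only [Matrix.mulVec_add, Matrix.mulVec_mulVec, Matrix.nonsing_inv_mul A hAd,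
      Matrix.one_mulVec, Matrix.mulVec_zero] at h
    exact eq_neg_of_add_eq_zero_left h
  have hw_eq : w = -((D⁻¹ * C) *ᵥ u) := by
    have h := congrArg (fun x => D⁻¹ *ᵥ x) h2
    simp only [Matrix.mulVec_add, Matrix.mulVec_mulVec, Matrix.nonsing_inv_mul D hDd,
      Matrix.one_mulVec, Matrix.mulVec_zero] at h
    exact eq_neg_of_add_eq_zero_right h
  set nu : ℝ := ‖(WithLp.equiv 2 (Fin n → ℝ)).symm u‖ with hnu
  set nw : ℝ := ‖(WithLp.equiv 2 (Fin n → ℝ)).symm w‖ with hnw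
  have key1 : nu ≤ specNorm (A⁻¹ * B) * nw := by
    rw [hnu, hu_eq]
    calc ‖(WithLp.equiv 2 (Fin n → ℝ)).symm (-((A⁻¹ * B) *ᵥ w))‖
        = ‖(WithLp.equiv 2 (Fin n → ℝ)).symm ((A⁻¹ * B) *ᵥ w)‖ := by
          rw [WithLp.equiv_symm_apply, WithLp.toLp_neg, norm_neg]
      _ ≤ _ := specNorm_mulVec _ _
  have key2 : nw ≤ specNorm (D⁻¹ * C) * nu := by
    rw [hnw, hw_eq]
    calc ‖(WithLp.equiv 2 (Fin n → ℝ)).symm (-((D⁻¹ * C) *ᵥ u))‖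
        = ‖(WithLp.equiv 2 (Fin n → ℝ)).symm ((D⁻¹ * C) *ᵥ u)‖ := by
          rw [WithLp.equiv_symm_apply, WithLp.toLp_neg, norm_neg]
      _ ≤ _ := specNorm_mulVec _ _
  have ha0 : 0 ≤ specNorm (A⁻¹ * B) := norm_nonneg _
  have hb0 : 0 ≤ specNorm (D⁻¹ * C) := norm_nonneg _
  have hnu0 : 0 ≤ nu := norm_nonneg _
  have hnw0 : 0 ≤ nw := norm_nonneg _
  have hnuz : nu = 0 := by nlinarith
  have hnwz : nw = 0 := by nlinarith
  have hu0 : u = 0 := by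
    have := norm_eq_zero.1 hnuz
    simpa using congrArg (WithLp.equiv 2 (Fin n → ℝ)) this
  have hw0 : w = 0 := by
    have := norm_eq_zero.1 hnwz
    simpa using congrArg (WithLp.equiv 2 (Fin n → ℝ)) this
  apply hv0
  funext i
  cases i with
  | inl i => exact congrFun hu0 i
  | inr i => exact congrFun hw0 i
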